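/- arXiv:1403.4418 — 2 statements merged into one kernel-verified Lean document; each statement's English description precedes it below -/
import Mathlib

section
/- Let γ be a holomorphic map on the half-plane H = {w : Re w > W₀}, with W₀ ≥ 1, such that H is forward invariant, Re γ(w) ≥ Re w + c for some c > 0, and |log(γ'(w))| ≤ 2K·|w|^{-3/2} for all w ∈ H (for some fixed branch of log with log γ'(w) → 0 as |w| → ∞). Then for all n ≥ 1 and all w ∈ H, |log((γ^n)'(w))| ≤ Σ_{k=0}^{n-1} 2K/(Re w + c·k) ^{3/2} ≤ K₁/√(Re w), where K₁ = 4K/c + 2K. -/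
lemma rpow32 {x : ℝ} (hx : 0 ≤ x) : x ^ ((3:ℝ)/2) = Real.sqrt x ^ 3 := by
  rw [Real.sqrt_eq_rpow, ← Real.rpow_natCast (x ^ ((1:ℝ)/2)) 3, ← Real.rpow_mul hx]
  norm_num

lemma key_step {a c K : ℝ} (ha : 0 < a) (hc : 0 < c) (hK : 0 < K) :
    2 * K / (a + c) ^ ((3:ℝ)/2) ≤ 4 * K / c * (1 / Real.sqrt a - 1 / Real.sqrt (a + c)) := by
  have hac : (0:ℝ) < a + c := by linarith
  set s := Real.sqrt a with hs
  set t := Real.sqrt (a + c) with ht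
  have hs0 : 0 < s := Real.sqrt_pos.mpr ha
  have ht0 : 0 < t := Real.sqrt_pos.mpr hac
  have hs2 : s ^ 2 = a := Real.sq_sqrt ha.le
  have ht2 : t ^ 2 = a + c := Real.sq_sqrt hac.le
  have hst : s ≤ t := Real.sqrt_le_sqrt (by linarith)
  rw [rpow32 hac.le, ← ht]
  rw [div_le_iff₀ (by positivity)]
  have expand : 4 * K / c * (1 / s - 1 / t) * t ^ 3 = 4 * K * (t - s) * t ^ 2 / (c * s) := by
    field_simp
  rw [expand, le_div_iff₀ (by positivity)]
  -- c = t^2 - s^2 = (t-s)(t+s)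
  have hcst : 2 * K * (c * s) = 2 * K * ((t ^ 2 - s ^ 2) * s) := by rw [hs2, ht2]; ring
  rw [hcst]
  nlinarith [mul_nonneg (mul_nonneg hK.le (sq_nonneg (t - s))) (by positivity : (0:ℝ) ≤ 2 * t + s)]


/-- Derivative estimate for iterates: if `γ` is holomorphic on the half-plane
`{Re w > W₀}`, leaves it invariant with `Re γ(w) ≥ Re w + c`, and a branch `L`
of `log γ'` satisfies `|L(w)| ≤ 2K·|w|^{-3/2}`, then the corresponding branch
`Σ_{k<n} L(γ^k(w))` of `log (γⁿ)'` is bounded by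
`Σ_{k<n} 2K/(Re w + ck)^{3/2} ≤ K₁/√(Re w)` with `K₁ = 4K/c + 2K`. -/
theorem stmt_7 (γ : ℂ → ℂ) (W₀ c K : ℝ) (hW : 1 ≤ W₀) (hc : 0 < c) (hK : 0 < K)
    (hhol : DifferentiableOn ℂ γ {w : ℂ | W₀ < w.re})
    (hinv : ∀ w : ℂ, W₀ < w.re → W₀ < (γ w).re)
    (hre : ∀ w : ℂ, W₀ < w.re → w.re + c ≤ (γ w).re)
    (L : ℂ → ℂ)
    (hL : ∀ w : ℂ, W₀ < w.re → Complex.exp (L w) = deriv γ w)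
    (hLb : ∀ w : ℂ, W₀ < w.re → ‖L w‖ ≤ 2 * K * ‖w‖ ^ (-(3 : ℝ) / 2)) :
    ∀ n : ℕ, 1 ≤ n → ∀ w : ℂ, W₀ < w.re →
      Complex.exp (∑ k ∈ Finset.range n, L (γ^[k] w)) = deriv (γ^[n]) w ∧
      ‖∑ k ∈ Finset.range n, L (γ^[k] w)‖
        ≤ ∑ k ∈ Finset.range n, 2 * K / (w.re + c * k) ^ ((3 : ℝ) / 2) ∧
      ∑ k ∈ Finset.range n, 2 * K / (w.re + c * k) ^ ((3 : ℝ) / 2)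
        ≤ (4 * K / c + 2 * K) / Real.sqrt w.re := by
  have hopen : IsOpen {w : ℂ | W₀ < w.re} :=
    isOpen_lt continuous_const Complex.continuous_re
  have hγdiff : ∀ z : ℂ, W₀ < z.re → DifferentiableAt ℂ γ z := fun z hz =>
    hhol.differentiableAt (hopen.mem_nhds hz)
  intro n hn w hw
  have hw1 : (1:ℝ) < w.re := lt_of_le_of_lt hW hw
  have orbit : ∀ k : ℕ, W₀ < (γ^[k] w).re ∧ w.re + c * k ≤ (γ^[k] w).re := by
    intro k; induction k with
    | zero => exact ⟨by simpa using hw, by simp⟩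
    | succ k ih =>
      rw [Function.iterate_succ_apply']
      refine ⟨hinv _ ih.1, ?_⟩
      have h := hre _ ih.1
      push_cast
      push_cast at ih
      linarith [ih.2]
  have hdiff : ∀ k : ℕ, DifferentiableAt ℂ (γ^[k]) w := by
    intro k; induction k with
    | zero => simpa using differentiableAt_id
    | succ k ih =>
      rw [Function.iterate_succ']
      exact DifferentiableAt.comp w (hγdiff _ (orbit k).1) ih
  have part1 : ∀ m : ℕ,
      Complex.exp (∑ k ∈ Finset.range m, L (γ^[k] w)) = deriv (γ^[m]) w := by
    intro m; induction m with
    | zero => simp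
    | succ m ih =>
      rw [Finset.sum_range_succ, Complex.exp_add, ih, Function.iterate_succ',
        deriv_comp w (hγdiff _ (orbit m).1) (hdiff m), hL _ (orbit m).1]
      simp [Function.comp, mul_comm]
  have hpos : ∀ k : ℕ, (0:ℝ) < w.re + c * k := by
    intro k
    have : (0:ℝ) ≤ c * k := by positivity
    linarith
  have part2 : ‖∑ k ∈ Finset.range n, L (γ^[k] w)‖
      ≤ ∑ k ∈ Finset.range n, 2 * K / (w.re + c * k) ^ ((3 : ℝ) / 2) := by
    refine (norm_sum_le _ _).trans (Finset.sum_le_sum ?_)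
    intro k _
    have h2 : w.re + c * k ≤ ‖γ^[k] w‖ :=
      le_trans (orbit k).2 (by exact Complex.re_le_norm _)
    calc ‖L (γ^[k] w)‖ ≤ 2 * K * ‖γ^[k] w‖ ^ (-(3:ℝ)/2) := hLb _ (orbit k).1
      _ ≤ 2 * K * (w.re + c * k) ^ (-(3:ℝ)/2) := by
          refine mul_le_mul_of_nonneg_left ?_ (by positivity)
          exact Real.rpow_le_rpow_of_nonpos (hpos k) h2 (by norm_num)
      _ = 2 * K / (w.re + c * k) ^ ((3:ℝ)/2) := by
          rw [show (-(3:ℝ)/2) = -((3:ℝ)/2) by ring, Real.rpow_neg (hpos k).le]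
          ring
  have part3 : ∀ m : ℕ, ∑ k ∈ Finset.range (m+1), 2 * K / (w.re + c * k) ^ ((3:ℝ)/2)
      ≤ 2 * K / w.re ^ ((3:ℝ)/2)
        + 4 * K / c * (1 / Real.sqrt w.re - 1 / Real.sqrt (w.re + c * m)) := by
    intro m; induction m with
    | zero => simp
    | succ m ih =>
      rw [Finset.sum_range_succ]
      have key := key_step (a := w.re + c * m) (c := c) (K := K) (hpos m) hc hK
      have e : w.re + c * ((m:ℝ) + 1) = (w.re + c * (m:ℝ)) + c := by ring
      push_cast
      rw [e]
      push_cast at ih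
      linarith [ih, key]
  refine ⟨part1 n, part2, ?_⟩
  obtain ⟨m, rfl⟩ : ∃ m, n = m + 1 := ⟨n - 1, (Nat.succ_pred_eq_of_pos hn).symm⟩
  have hWs : 1 ≤ Real.sqrt w.re := by
    have := Real.sqrt_le_sqrt hw1.le
    simpa using this
  have hWsp : 0 < Real.sqrt w.re := lt_of_lt_of_le one_pos hWs
  have h3 : Real.sqrt w.re ≤ w.re ^ ((3:ℝ)/2) := by
    rw [rpow32 (by linarith : (0:ℝ) ≤ w.re)]
    nlinarith [hWs, sq_nonneg (Real.sqrt w.re - 1), sq_nonneg (Real.sqrt w.re + 1)]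
  have h1 : 2 * K / w.re ^ ((3:ℝ)/2) ≤ 2 * K / Real.sqrt w.re := by
    have hWsp : 0 < Real.sqrt w.re := lt_of_lt_of_le one_pos hWs
    exact div_le_div_of_nonneg_left (by positivity) hWsp h3
  have h2 : 0 ≤ 4 * K / c * (1 / Real.sqrt (w.re + c * m)) := by positivity
  have expand : 4 * K / c * (1 / Real.sqrt w.re - 1 / Real.sqrt (w.re + c * m))
      = 4 * K / c * (1 / Real.sqrt w.re) - 4 * K / c * (1 / Real.sqrt (w.re + c * m)) := by
    ring
  have final : (4 * K / c + 2 * K) / Real.sqrt w.re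
      = 4 * K / c * (1 / Real.sqrt w.re) + 2 * K / Real.sqrt w.re := by ring
  have := part3 m
  rw [final]
  linarith [this]
end

section
/- Let a, b be complex numbers with Re a > 0 and |Im a / Re a| ≤ 1/2, writing z = a^{-1/2} for the principal branch. Then |Im(a^{-1/2})| ≤ (Re a)^{-1/2} · |Im a / Re a|. -/
/-- Bound on the imaginary part of the principal inverse square root:
if `Re a > 0` and `|Im a / Re a| ≤ 1/2`, then
`|Im (a^{-1/2})| ≤ (Re a)^{-1/2} · |Im a / Re a|`. -/
theorem stmt_9 (a : ℂ) (ha : 0 < a.re) (hratio : |a.im / a.re| ≤ 1 / 2) :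
    |(a ^ (-(1 / 2) : ℂ)).im| ≤ (Real.sqrt a.re)⁻¹ * |a.im / a.re| := by
  have ha0 : a ≠ 0 := by
    intro h; rw [h] at ha; simp at ha
  have habs : 0 < ‖a‖ := norm_pos_iff.mpr ha0
  set θ := Complex.arg a with hθ
  set t := a.im / a.re with ht
  -- |θ| < π/2
  have hθlt : |θ| < Real.pi / 2 := by
    rw [Complex.abs_arg_lt_pi_div_two_iff]; exact Or.inl ha
  have htan : Real.tan θ = t := Complex.tan_arg a
  -- |θ| ≤ |t|
  have hθt : |θ| ≤ |t| := by
    rcases le_or_gt 0 θ with h | h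
    · have := Real.le_tan h (by rwa [abs_of_nonneg h] at hθlt)
      rw [htan] at this
      calc |θ| = θ := abs_of_nonneg h
        _ ≤ t := this
        _ ≤ |t| := le_abs_self t
    · have hneg : 0 ≤ -θ := by linarith
      have := Real.le_tan hneg (by rwa [abs_of_neg h] at hθlt)
      rw [Real.tan_neg, htan] at this
      calc |θ| = -θ := abs_of_neg h
        _ ≤ -t := this
        _ ≤ |t| := neg_le_abs t
  -- compute the imaginary part
  have hcpow : a ^ (-(1 / 2) : ℂ) = Complex.exp ((-(1 / 2) : ℂ) * Complex.log a) := by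
    rw [Complex.cpow_def_of_ne_zero ha0]; ring_nf
  have hre : ((-(1 / 2) : ℂ) * Complex.log a).re = -(1 / 2) * Real.log (‖a‖) := by
    simp [Complex.mul_re, Complex.log_re, Complex.log_im]
  have him : ((-(1 / 2) : ℂ) * Complex.log a).im = -(1 / 2) * θ := by
    simp [Complex.mul_im, Complex.log_re, Complex.log_im, hθ]
  have hImeq : (a ^ (-(1 / 2) : ℂ)).im
      = Real.exp (-(1 / 2) * Real.log (‖a‖)) * Real.sin (-(1 / 2) * θ) := by
    rw [hcpow, Complex.exp_im, hre, him]
  -- exp term equals (sqrt |a|)⁻¹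
  have hexp : Real.exp (-(1 / 2) * Real.log (‖a‖)) = (Real.sqrt (‖a‖))⁻¹ := by
    rw [Real.sqrt_eq_rpow, Real.rpow_def_of_pos habs, ← Real.exp_neg]
    ring_nf
  have hsq : (Real.sqrt (‖a‖))⁻¹ ≤ (Real.sqrt a.re)⁻¹ := by
    apply inv_anti₀ (Real.sqrt_pos.mpr ha)
    exact Real.sqrt_le_sqrt (Complex.re_le_norm a)
  have hsqpos : 0 < (Real.sqrt (‖a‖))⁻¹ :=
    inv_pos.mpr (Real.sqrt_pos.mpr habs)
  have hsin : |Real.sin (-(1 / 2) * θ)| ≤ |t| := by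
    calc |Real.sin (-(1 / 2) * θ)| ≤ |(-(1 / 2) * θ)| := Real.abs_sin_le_abs
      _ = |θ| / 2 := by rw [abs_mul]; rw [abs_of_nonpos (by norm_num : (-(1/2):ℝ) ≤ 0)]; ring
      _ ≤ |t| := by linarith [abs_nonneg t]
  calc |(a ^ (-(1 / 2) : ℂ)).im|
      = (Real.sqrt (‖a‖))⁻¹ * |Real.sin (-(1 / 2) * θ)| := by
        rw [hImeq, abs_mul, hexp, abs_of_pos hsqpos]
    _ ≤ (Real.sqrt a.re)⁻¹ * |t| := by
        apply mul_le_mul hsq hsin (abs_nonneg _) (le_of_lt (inv_pos.mpr (Real.sqrt_pos.mpr ha)))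
end
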